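/- Two probability distributions π, π' on the path set 𝒫 of a directed acyclic graph are path decompositions of the same quasi-flow if and only if π − π' lies in the Ryser subspace ℛ. In particular, for any π ∈ M ⊆ Δ(𝒫), the set of distributions in M decomposing the same quasi-flow as π is exactly (π + ℛ) ∩ M. -/

import Mathlib

open scoped Classical
set_option linter.unusedSectionVars false
set_option maxHeartbeats 1000000

namespace StmtDAG

variable {N E : Type*} [Fintype N] [Fintype E] [DecidableEq N] [DecidableEq E]

/-- `(src, tgt, s, t)` describes a directed acyclic graph with finite node type `N` and
finite edge type `E` (parallel edges are allowed, since `E` is an abstract type with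
endpoint maps): there is no directed cycle, `s` is the unique node with no incoming edge
(the source), and `t` is the unique node with no outgoing edge (the sink). -/
def IsDAG (src tgt : E → N) (s t : N) : Prop :=
  (∀ a : N, ¬ Relation.TransGen (fun a b => ∃ e, src e = a ∧ tgt e = b) a a) ∧
  (∀ e, tgt e ≠ s) ∧ (∀ e, src e ≠ t) ∧
  (∀ n, (∀ e, tgt e ≠ n) → n = s) ∧
  (∀ n, (∀ e, src e ≠ n) → n = t)

variable (src tgt : E → N) (s t : N)

/-- A path from `s` to `t`: a nonempty list of consecutive edges starting at `s` and
ending at `t`.  (In a DAG these are in bijective correspondence with the edge *sets* in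
which `s` and `t` each appear exactly once and every other node appearing at all appears
exactly once as a head and once as a tail.) -/
structure GPath where
  /-- the edges of the path, in order from the source to the sink -/
  edges : List E
  ne : edges ≠ []
  chain : edges.Chain' fun e f => tgt e = src f
  first : src (edges.head ne) = s
  last : tgt (edges.getLast ne) = t

/-- A quasi-flow: a nonnegative edge weighting such that, at every node other than the
source and the sink, total in-flow equals total out-flow. -/
def IsQuasiFlow (f : E → ℝ) : Prop :=
  (∀ e, 0 ≤ f e) ∧
  ∀ n : N, n ≠ s → n ≠ t →
    (∑ e : E, if tgt e = n then f e else 0) = (∑ e : E, if src e = n then f e else 0)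

/-- `π` is a path decomposition of the quasi-flow `f`: a nonnegative weighting of paths
whose induced edge weights recover `f`. -/
def IsPathDecomp (f : E → ℝ) (π : GPath src tgt s t → ℝ) : Prop :=
  (∀ P, 0 ≤ π P) ∧
  ∀ e : E, f e = ∑ᶠ P : GPath src tgt s t, if e ∈ P.edges then π P else 0

/-- `P.edges = a ++ b`, split exactly at the node `n`. -/
def SplitsAt (P : GPath src tgt s t) (n : N) (a b : List E) : Prop :=
  P.edges = a ++ b ∧ (∀ h : b ≠ [], src (b.head h) = n) ∧ (b = [] → n = t)

/-- `(Q₁, Q₂)` are the `n`-conjugates of the pair `(P₁, P₂)`, both of which pass through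
the node `n`: `Q₁` follows `P₁` up to `n` and `P₂` thereafter, and vice versa. -/
def IsConjAt (n : N) (P₁ P₂ Q₁ Q₂ : GPath src tgt s t) : Prop :=
  ∃ a₁ b₁ a₂ b₂ : List E,
    SplitsAt src tgt s t P₁ n a₁ b₁ ∧ SplitsAt src tgt s t P₂ n a₂ b₂ ∧
    Q₁.edges = a₁ ++ b₂ ∧ Q₂.edges = a₂ ++ b₁

/-- The indicator (point mass) vector of a path. -/
noncomputable def indP (P₀ : GPath src tgt s t) : GPath src tgt s t → ℝ :=
  fun P => if P = P₀ then 1 else 0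

/-- A Ryser swap: `1_{Q₁} + 1_{Q₂} - 1_{P₁} - 1_{P₂}` where `(Q₁, Q₂)` are the
`n`-conjugates of a pair `(P₁, P₂)` compatible at some node `n`. -/
def IsRyserSwap (R : GPath src tgt s t → ℝ) : Prop :=
  ∃ (n : N) (P₁ P₂ Q₁ Q₂ : GPath src tgt s t),
    IsConjAt src tgt s t n P₁ P₂ Q₁ Q₂ ∧
    R = indP src tgt s t Q₁ + indP src tgt s t Q₂ -
          indP src tgt s t P₁ - indP src tgt s t P₂

/-- The Ryser subspace: the linear span of all Ryser swaps. -/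
noncomputable def RyserSub : Submodule ℝ (GPath src tgt s t → ℝ) :=
  Submodule.span ℝ {R | IsRyserSwap src tgt s t R}

/-- `π` is a probability distribution on the path set. -/
def IsDistP (π : GPath src tgt s t → ℝ) : Prop :=
  (∀ P, 0 ≤ π P) ∧ ∑ᶠ P : GPath src tgt s t, π P = 1


/-! Auxiliary walk lemmas -/

def Step (a b : N) : Prop := ∃ e, src e = a ∧ tgt e = b

variable {src tgt s t}

lemma gpath_ext {P Q : GPath src tgt s t} (h : P.edges = Q.edges) : P = Q := by
  cases P; cases Q; simpa using h

lemma walk_src {f e : E} {l : List E} (hc : (f :: l).Chain' fun e f => tgt e = src f)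
    (he : e ∈ l) : Relation.TransGen (Step src tgt) (src f) (src e) := by
  induction l generalizing f with
  | nil => simp at he
  | cons g l' ih =>
    have hfg : tgt f = src g := (List.isChain_cons_cons.1 hc).1
    rcases List.mem_cons.1 he with rfl | he'
    · exact Relation.TransGen.single ⟨f, rfl, hfg⟩
    · exact Relation.TransGen.head ⟨f, rfl, hfg⟩ (ih (List.IsChain.tail hc) he')

lemma not_nodup_split {l : List E} (h : ¬ l.Nodup) :
    ∃ (u : List E) (a : E) (v : List E), l = u ++ a :: v ∧ a ∈ v := by
  induction l with
  | nil => simp at h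
  | cons a l' ih =>
    by_cases ha : a ∈ l'
    · exact ⟨[], a, l', rfl, ha⟩
    · have : ¬ l'.Nodup := fun hn => h (List.nodup_cons.2 ⟨ha, hn⟩)
      obtain ⟨u, b, v, rfl, hb⟩ := ih this
      exact ⟨a :: u, b, v, rfl, hb⟩

lemma edges_nodup (hdag : IsDAG src tgt s t) (P : GPath src tgt s t) : P.edges.Nodup := by
  by_contra h
  obtain ⟨u, a, v, he, hav⟩ := not_nodup_split h
  have hc : (a :: v).Chain' fun e f => tgt e = src f := by
    have := P.chain; rw [he] at this
    exact this.right_of_append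
  exact hdag.1 (src a) (walk_src hc hav)

noncomputable def pathFintype (hdag : IsDAG src tgt s t) : Fintype (GPath src tgt s t) :=
  Fintype.ofInjective (fun P => (⟨P.edges, edges_nodup hdag P⟩ : {l : List E // l.Nodup}))
    (fun P Q h => gpath_ext (by simpa using congrArg Subtype.val h))


/-! Prefixes and suffixes at a node -/

def IsPre (src tgt : E → N) (s t : N) (a : List E) (n : N) : Prop :=
  a.Chain' (fun e f => tgt e = src f) ∧
  (∀ h : a ≠ [], src (a.head h) = s ∧ tgt (a.getLast h) = n) ∧ (a = [] → n = s)

def IsSuf (src tgt : E → N) (s t : N) (b : List E) (n : N) : Prop :=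
  b.Chain' (fun e f => tgt e = src f) ∧
  (∀ h : b ≠ [], src (b.head h) = n ∧ tgt (b.getLast h) = t) ∧ (b = [] → n = t)

lemma pre_nil : IsPre src tgt s t ([] : List E) s :=
  ⟨List.isChain_nil, fun h => absurd rfl h, fun _ => rfl⟩

lemma suf_nil : IsSuf src tgt s t ([] : List E) t :=
  ⟨List.isChain_nil, fun h => absurd rfl h, fun _ => rfl⟩

lemma path_suf (P : GPath src tgt s t) : IsSuf src tgt s t P.edges s :=
  ⟨P.chain, fun h => ⟨P.first, P.last⟩, fun h => absurd h P.ne⟩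

lemma suf_cons {e : E} {b : List E} {n : N} (hb : IsSuf src tgt s t b n) (hn : tgt e = n) :
    IsSuf src tgt s t (e :: b) (src e) := by
  refine ⟨List.isChain_cons.2 ⟨?_, hb.1⟩, fun h => ⟨rfl, ?_⟩, by simp⟩
  · intro y hy
    have hbne : b ≠ [] := by rintro rfl; simp at hy
    rw [List.head?_eq_head hbne, Option.mem_some_iff] at hy
    rw [← hy, (hb.2.1 hbne).1]
    exact hn
  · rcases eq_or_ne b [] with rfl | hbne
    · simpa using hn.trans (hb.2.2 rfl)
    · rw [List.getLast_cons hbne]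
      exact (hb.2.1 hbne).2

lemma suf_head {e : E} {b : List E} {n : N} (hb : IsSuf src tgt s t (e :: b) n) :
    src e = n := (hb.2.1 (by simp)).1

lemma suf_tail {e : E} {b : List E} {n : N} (hb : IsSuf src tgt s t (e :: b) n) :
    IsSuf src tgt s t b (tgt e) := by
  refine ⟨hb.1.tail, fun h => ⟨?_, ?_⟩, fun h => ?_⟩
  · have := List.isChain_cons.1 hb.1
    have := this.1 (b.head h) (List.head?_eq_head h)
    exact this.symm
  · have := (hb.2.1 (by simp)).2
    rwa [List.getLast_cons h] at this
  · subst h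
    simpa using (hb.2.1 (by simp)).2

lemma pre_snoc {e : E} {a : List E} {n : N} (ha : IsPre src tgt s t a n) (hn : src e = n) :
    IsPre src tgt s t (a ++ [e]) (tgt e) := by
  refine ⟨List.isChain_append.2 ⟨ha.1, List.isChain_singleton e, ?_⟩, fun h => ⟨?_, ?_⟩, by simp⟩
  · intro x hx y hy
    have hane : a ≠ [] := by rintro rfl; simp at hx
    rw [List.getLast?_eq_getLast hane, Option.mem_some_iff] at hx
    simp only [List.head?_cons, Option.mem_some_iff] at hy
    rw [← hx, ← hy, (ha.2.1 hane).2]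
    exact hn.symm
  · rcases eq_or_ne a [] with rfl | hane
    · simpa using hn.trans (ha.2.2 rfl)
    · rw [List.head_append_of_ne_nil hane]
      exact (ha.2.1 hane).1
  · simp [List.getLast_append]

lemma pre_at_s (hdag : IsDAG src tgt s t) {a : List E} (ha : IsPre src tgt s t a s) :
    a = [] := by
  rcases eq_or_ne a [] with rfl | hane
  · rfl
  · exact absurd (ha.2.1 hane).2 (hdag.2.1 _)

lemma suf_at_t (hdag : IsDAG src tgt s t) {b : List E} (hb : IsSuf src tgt s t b t) :
    b = [] := by
  rcases eq_or_ne b [] with rfl | hbne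
  · rfl
  · exact absurd (hb.2.1 hbne).1 (hdag.2.2.1 _)

/-! Composition of a prefix and a suffix at a node -/

def composePath (hst : s ≠ t) {a b : List E} {n : N}
    (ha : IsPre src tgt s t a n) (hb : IsSuf src tgt s t b n) : GPath src tgt s t where
  edges := a ++ b
  ne := by
    intro h
    rcases List.append_eq_nil_iff.1 h with ⟨rfl, rfl⟩
    exact hst ((ha.2.2 rfl).symm.trans (hb.2.2 rfl))
  chain := by
    refine List.isChain_append.2 ⟨ha.1, hb.1, ?_⟩
    intro x hx y hy
    have hane : a ≠ [] := by rintro rfl; simp at hx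
    have hbne : b ≠ [] := by rintro rfl; simp at hy
    rw [List.getLast?_eq_getLast hane, Option.mem_some_iff] at hx
    rw [List.head?_eq_head hbne, Option.mem_some_iff] at hy
    rw [← hx, ← hy, (ha.2.1 hane).2, (hb.2.1 hbne).1]
  first := by
    rcases eq_or_ne a [] with rfl | hane
    · have hbne : b ≠ [] := by
        rintro rfl
        exact hst ((ha.2.2 rfl).symm.trans (hb.2.2 rfl))
      simp only [List.nil_append]
      rw [(hb.2.1 hbne).1]
      exact ha.2.2 rfl
    · rw [List.head_append_of_ne_nil hane]
      exact (ha.2.1 hane).1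
  last := by
    rcases eq_or_ne b [] with rfl | hbne
    · have hane : a ≠ [] := by
        rintro rfl
        exact hst ((ha.2.2 rfl).symm.trans (hb.2.2 rfl))
      simp only [List.append_nil]
      rw [(ha.2.1 hane).2]
      exact hb.2.2 rfl
    · rw [List.getLast_append]
      rw [dif_neg (by simpa using hbne)]
      exact (hb.2.1 hbne).2

@[simp] lemma composePath_edges (hst : s ≠ t) {a b : List E} {n : N}
    (ha : IsPre src tgt s t a n) (hb : IsSuf src tgt s t b n) :
    (composePath hst ha hb).edges = a ++ b := rfl

/-! Reference prefixes and suffixes -/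

def Touched (src tgt : E → N) (s t : N) (n : N) : Prop :=
  (∃ a, IsPre src tgt s t a n) ∧ (∃ b, IsSuf src tgt s t b n)

variable (src tgt s t)

noncomputable def refPre (n : N) : List E :=
  if h : Touched src tgt s t n then h.1.choose else []

noncomputable def refSuf (n : N) : List E :=
  if h : Touched src tgt s t n then h.2.choose else []

variable {src tgt s t}

lemma refPre_spec {n : N} (h : Touched src tgt s t n) :
    IsPre src tgt s t (refPre src tgt s t n) n := by
  rw [refPre, dif_pos h]; exact h.1.choose_spec

lemma refSuf_spec {n : N} (h : Touched src tgt s t n) :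
    IsSuf src tgt s t (refSuf src tgt s t n) n := by
  rw [refSuf, dif_pos h]; exact h.2.choose_spec

lemma refSuf_t (hdag : IsDAG src tgt s t) : refSuf src tgt s t t = [] := by
  by_cases h : Touched src tgt s t t
  · rw [refSuf, dif_pos h]; exact suf_at_t hdag h.2.choose_spec
  · rw [refSuf, dif_neg h]

/-! The normal-form building blocks -/

noncomputable def term (src tgt : E → N) (s t : N) (hst : s ≠ t) (e : E) :
    GPath src tgt s t → ℝ :=
  if h : Touched src tgt s t (src e) ∧ Touched src tgt s t (tgt e) then
    indP src tgt s t (composePath hst (refPre_spec h.1) (suf_cons (refSuf_spec h.2) rfl))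
      - indP src tgt s t (composePath hst (refPre_spec h.1) (refSuf_spec h.1))
  else 0

noncomputable def basePath (hst : s ≠ t) (h : Touched src tgt s t s) : GPath src tgt s t :=
  composePath hst pre_nil (refSuf_spec h)

/-! Every conjugate rearrangement of composed paths is a Ryser swap -/

lemma swap_mem (hst : s ≠ t) {n : N} {a₁ b₁ a₂ b₂ : List E}
    (ha₁ : IsPre src tgt s t a₁ n) (hb₁ : IsSuf src tgt s t b₁ n)
    (ha₂ : IsPre src tgt s t a₂ n) (hb₂ : IsSuf src tgt s t b₂ n) :
    indP src tgt s t (composePath hst ha₁ hb₂) + indP src tgt s t (composePath hst ha₂ hb₁)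
      - indP src tgt s t (composePath hst ha₁ hb₁)
      - indP src tgt s t (composePath hst ha₂ hb₂) ∈ RyserSub src tgt s t := by
  apply Submodule.subset_span
  exact ⟨n, composePath hst ha₁ hb₁, composePath hst ha₂ hb₂,
    composePath hst ha₁ hb₂, composePath hst ha₂ hb₁,
    ⟨a₁, b₁, a₂, b₂, ⟨rfl, fun h => (hb₁.2.1 h).1, hb₁.2.2⟩,
      ⟨rfl, fun h => (hb₂.2.1 h).1, hb₂.2.2⟩, rfl, rfl⟩, rfl⟩

/-! The telescoping lemma: every path is equivalent, modulo the Ryser subspace,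
to the base path plus the sum of its edge terms. -/

lemma telescope (hdag : IsDAG src tgt s t) (hst : s ≠ t) (P : GPath src tgt s t) :
    ∀ (v u : List E) (m : N) (he : P.edges = u ++ v) (hu : IsPre src tgt s t u m)
      (hv : IsSuf src tgt s t v m),
      indP src tgt s t P
        - indP src tgt s t (composePath hst hu (refSuf_spec ⟨⟨u, hu⟩, ⟨v, hv⟩⟩))
        - (v.map (term src tgt s t hst)).sum ∈ RyserSub src tgt s t := by
  intro v
  induction v with
  | nil =>
    intro u m he hu hv
    have hmt : m = t := hv.2.2 rfl
    subst hmt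
    have h0 : composePath hst hu (refSuf_spec ⟨⟨u, hu⟩, ⟨[], hv⟩⟩) = P := by
      apply gpath_ext
      rw [composePath_edges, refSuf_t hdag, List.append_nil]
      simpa using he.symm
    rw [h0]
    simp only [List.map_nil, List.sum_nil, sub_zero, sub_self]
    exact Submodule.zero_mem _
  | cons e v' ih =>
    intro u m he hu hv
    have hm : src e = m := suf_head hv
    subst hm
    have hv' : IsSuf src tgt s t v' (tgt e) := suf_tail hv
    have hu' : IsPre src tgt s t (u ++ [e]) (tgt e) := pre_snoc hu rfl
    have he' : P.edges = (u ++ [e]) ++ v' := by simpa using he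
    have IH := ih (u ++ [e]) (tgt e) he' hu' hv'
    have htm : Touched src tgt s t (src e) := ⟨⟨u, hu⟩, ⟨e :: v', hv⟩⟩
    have hte : Touched src tgt s t (tgt e) := ⟨⟨u ++ [e], hu'⟩, ⟨v', hv'⟩⟩
    have hterm : term src tgt s t hst e =
        indP src tgt s t (composePath hst (refPre_spec htm) (suf_cons (refSuf_spec hte) rfl))
          - indP src tgt s t (composePath hst (refPre_spec htm) (refSuf_spec htm)) := by
      rw [term, dif_pos ⟨htm, hte⟩]
    have hswap := swap_mem hst hu (refSuf_spec htm) (refPre_spec htm)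
      (suf_cons (refSuf_spec hte) rfl)
    have hAeq : composePath hst hu (suf_cons (refSuf_spec hte) rfl)
        = composePath hst hu' (refSuf_spec ⟨⟨u ++ [e], hu'⟩, ⟨v', hv'⟩⟩) := by
      apply gpath_ext
      simp
    rw [hAeq] at hswap
    have hsum := Submodule.add_mem _ IH hswap
    rw [List.map_cons, List.sum_cons, hterm]
    convert hsum using 1
    abel
/-! The kernel of the edge-weight and total-mass functionals is contained in the
Ryser subspace. -/

lemma ker_sub_ryser (hdag : IsDAG src tgt s t) (x : GPath src tgt s t → ℝ)
    (hx1 : ∀ e : E, ∑ᶠ P : GPath src tgt s t, (if e ∈ P.edges then x P else 0) = 0)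
    (hx2 : ∑ᶠ P : GPath src tgt s t, x P = 0) : x ∈ RyserSub src tgt s t := by
  haveI : Fintype (GPath src tgt s t) := pathFintype hdag
  simp only [finsum_eq_sum_of_fintype] at hx1 hx2
  by_cases hNE : Nonempty (GPath src tgt s t)
  swap
  · have hx0 : x = 0 := funext fun P => absurd ⟨P⟩ hNE
    rw [hx0]; exact Submodule.zero_mem _
  obtain ⟨P₀⟩ := hNE
  have hst : s ≠ t := fun h => hdag.2.2.1 (P₀.edges.head P₀.ne) (P₀.first.trans h)
  have hts : Touched src tgt s t s := ⟨⟨[], pre_nil⟩, ⟨P₀.edges, path_suf P₀⟩⟩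
  set B := basePath hst hts with hBdef
  have key : ∀ P : GPath src tgt s t,
      indP src tgt s t P - (indP src tgt s t B
        + (P.edges.map (term src tgt s t hst)).sum) ∈ RyserSub src tgt s t := by
    intro P
    have h := telescope hdag hst P P.edges [] s (by simp) pre_nil (path_suf P)
    have hB : composePath hst pre_nil
        (refSuf_spec (⟨⟨[], pre_nil⟩, ⟨P.edges, path_suf P⟩⟩ :
          Touched src tgt s t s)) = B := rfl
    rw [hB] at h
    convert h using 1
    abel
  have hx : x = ∑ P : GPath src tgt s t, x P • indP src tgt s t P := by
    funext Q
    simp [indP, Finset.sum_apply, Pi.smul_apply, mul_ite, eq_comm]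
  have hsplit : x - ∑ P : GPath src tgt s t,
      x P • (indP src tgt s t B + (P.edges.map (term src tgt s t hst)).sum)
      = ∑ P : GPath src tgt s t, x P • (indP src tgt s t P
        - (indP src tgt s t B + (P.edges.map (term src tgt s t hst)).sum)) := by
    simp only [smul_sub, Finset.sum_sub_distrib]
    rw [← hx]
  have hmem : x - ∑ P : GPath src tgt s t,
      x P • (indP src tgt s t B + (P.edges.map (term src tgt s t hst)).sum)
      ∈ RyserSub src tgt s t := by
    rw [hsplit]
    exact Submodule.sum_mem _ fun P _ => Submodule.smul_mem _ _ (key P)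
  have hconv : ∀ P : GPath src tgt s t, (P.edges.map (term src tgt s t hst)).sum
      = ∑ e : E, if e ∈ P.edges then term src tgt s t hst e else 0 := by
    intro P
    rw [← List.sum_toFinset _ (edges_nodup hdag P), ← Finset.sum_filter]
    congr 1
    ext e
    simp
  have hY : ∑ P : GPath src tgt s t,
      x P • (indP src tgt s t B + (P.edges.map (term src tgt s t hst)).sum) = 0 := by
    simp only [smul_add, Finset.sum_add_distrib]
    have h1 : ∑ P : GPath src tgt s t, x P • indP src tgt s t B = 0 := by
      rw [← Finset.sum_smul, hx2, zero_smul]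
    have h2 : ∑ P : GPath src tgt s t,
        x P • (P.edges.map (term src tgt s t hst)).sum = 0 := by
      calc ∑ P : GPath src tgt s t, x P • (P.edges.map (term src tgt s t hst)).sum
          = ∑ P : GPath src tgt s t, ∑ e : E,
            (if e ∈ P.edges then x P else 0) • term src tgt s t hst e := by
            refine Finset.sum_congr rfl fun P _ => ?_
            rw [hconv, Finset.smul_sum]
            refine Finset.sum_congr rfl fun e _ => ?_
            split <;> simp
        _ = ∑ e : E, (∑ P : GPath src tgt s t, if e ∈ P.edges then x P else 0)
              • term src tgt s t hst e := by
            rw [Finset.sum_comm]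
            refine Finset.sum_congr rfl fun e _ => ?_
            rw [Finset.sum_smul]
        _ = 0 := by simp [hx1]
    rw [h1, h2, add_zero]
  rw [hY, sub_zero] at hmem
  exact hmem
/-! Walks to targets, uniqueness of occurrences of a node on a path -/

lemma walk_tgt {f e : E} {l : List E} (hc : (f :: l).Chain' fun e f => tgt e = src f)
    (he : e ∈ l) : Relation.TransGen (Step src tgt) (tgt f) (tgt e) := by
  induction l generalizing f with
  | nil => simp at he
  | cons g l' ih =>
    have hfg : tgt f = src g := (List.isChain_cons_cons.1 hc).1
    rcases List.mem_cons.1 he with rfl | he'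
    · exact Relation.TransGen.single ⟨e, hfg.symm, rfl⟩
    · exact Relation.TransGen.head ⟨g, hfg.symm, rfl⟩ (ih (List.IsChain.tail hc) he')

lemma two_mem_split {e₁ e₂ : E} {l : List E} (h1 : e₁ ∈ l) (h2 : e₂ ∈ l) (hne : e₁ ≠ e₂) :
    ∃ (u v : List E), (l = u ++ e₁ :: v ∧ e₂ ∈ v) ∨ (l = u ++ e₂ :: v ∧ e₁ ∈ v) := by
  induction l with
  | nil => simp at h1
  | cons a l' ih =>
    rcases List.mem_cons.1 h1 with rfl | h1'
    · have h2' : e₂ ∈ l' := by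
        rcases List.mem_cons.1 h2 with h | h
        · exact absurd h.symm hne
        · exact h
      exact ⟨[], l', Or.inl ⟨rfl, h2'⟩⟩
    · rcases List.mem_cons.1 h2 with rfl | h2'
      · exact ⟨[], l', Or.inr ⟨rfl, h1'⟩⟩
      · obtain ⟨u, v, h⟩ := ih h1' h2'
        rcases h with ⟨hl, hm⟩ | ⟨hl, hm⟩
        · exact ⟨a :: u, v, Or.inl ⟨by rw [hl]; rfl, hm⟩⟩
        · exact ⟨a :: u, v, Or.inr ⟨by rw [hl]; rfl, hm⟩⟩

lemma tgt_unique (hdag : IsDAG src tgt s t) (P : GPath src tgt s t) {e₁ e₂ : E}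
    (h1 : e₁ ∈ P.edges) (h2 : e₂ ∈ P.edges) (h : tgt e₁ = tgt e₂) : e₁ = e₂ := by
  by_contra hne
  obtain ⟨u, v, hc⟩ := two_mem_split h1 h2 hne
  rcases hc with ⟨hl, hm⟩ | ⟨hl, hm⟩
  · have hch : (e₁ :: v).Chain' fun e f => tgt e = src f := by
      have := P.chain; rw [hl] at this; exact this.right_of_append
    have hw := walk_tgt hch hm
    rw [← h] at hw
    exact hdag.1 (tgt e₁) hw
  · have hch : (e₂ :: v).Chain' fun e f => tgt e = src f := by
      have := P.chain; rw [hl] at this; exact this.right_of_append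
    have hw := walk_tgt hch hm
    rw [h] at hw
    exact hdag.1 (tgt e₂) hw

lemma src_unique (hdag : IsDAG src tgt s t) (P : GPath src tgt s t) {e₁ e₂ : E}
    (h1 : e₁ ∈ P.edges) (h2 : e₂ ∈ P.edges) (h : src e₁ = src e₂) : e₁ = e₂ := by
  by_contra hne
  obtain ⟨u, v, hc⟩ := two_mem_split h1 h2 hne
  rcases hc with ⟨hl, hm⟩ | ⟨hl, hm⟩
  · have hch : (e₁ :: v).Chain' fun e f => tgt e = src f := by
      have := P.chain; rw [hl] at this; exact this.right_of_append
    exact hdag.1 (src e₁) (by  have := walk_src hch hm; rwa [← h] at this)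
  · have hch : (e₂ :: v).Chain' fun e f => tgt e = src f := by
      have := P.chain; rw [hl] at this; exact this.right_of_append
    exact hdag.1 (src e₂) (by have := walk_src hch hm; rwa [h] at this)

/-! For an interior node, a path enters it iff it leaves it. -/

lemma in_iff_out (hdag : IsDAG src tgt s t) (P : GPath src tgt s t) {n : N}
    (hns : n ≠ s) (hnt : n ≠ t) :
    (∃ e ∈ P.edges, tgt e = n) ↔ (∃ e ∈ P.edges, src e = n) := by
  constructor
  · rintro ⟨e, he, rfl⟩
    obtain ⟨u, v, hl⟩ := List.append_of_mem he
    have hch : (e :: v).Chain' fun e f => tgt e = src f := by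
      have := P.chain; rw [hl] at this; exact this.right_of_append
    cases v with
    | nil =>
      exfalso
      apply hnt
      have hP := P.last
      simp only [hl] at hP
      rw [List.getLast_append] at hP
      simpa using hP
    | cons f v' =>
      exact ⟨f, by rw [hl]; simp, ((List.isChain_cons_cons.1 hch).1).symm⟩
  · rintro ⟨e, he, rfl⟩
    obtain ⟨u, v, hl⟩ := List.append_of_mem he
    cases u with
    | nil =>
      exfalso
      apply hns
      have hP := P.first
      simp only [hl] at hP
      simpa using hP
    | cons f u' =>
      have hch := P.chain
      rw [hl] at hch
      replace hch := List.isChain_append.1 hch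
      have hj := hch.2.2 ((f :: u').getLast (by simp))
        (by rw [List.getLast?_eq_getLast (l := f :: u') (by simp)]; exact Option.mem_some_iff.2 rfl)
        e (Option.mem_some_iff.2 rfl)
      exact ⟨(f :: u').getLast (by simp), by rw [hl]; exact List.mem_append_left _ (List.getLast_mem _), hj⟩

lemma count_in_out (hdag : IsDAG src tgt s t) (P : GPath src tgt s t) {n : N}
    (hns : n ≠ s) (hnt : n ≠ t) :
    (∑ e : E, if tgt e = n ∧ e ∈ P.edges then (1 : ℝ) else 0)
      = ∑ e : E, if src e = n ∧ e ∈ P.edges then (1 : ℝ) else 0 := by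
  rw [Finset.sum_boole, Finset.sum_boole]
  congr 1
  have h1 : (Finset.univ.filter fun e => tgt e = n ∧ e ∈ P.edges).card ≤ 1 := by
    refine Finset.card_le_one.2 fun e₁ h₁ e₂ h₂ => ?_
    simp only [Finset.mem_filter] at h₁ h₂
    exact tgt_unique hdag P h₁.2.2 h₂.2.2 (h₁.2.1.trans h₂.2.1.symm)
  have h2 : (Finset.univ.filter fun e => src e = n ∧ e ∈ P.edges).card ≤ 1 := by
    refine Finset.card_le_one.2 fun e₁ h₁ e₂ h₂ => ?_
    simp only [Finset.mem_filter] at h₁ h₂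
    exact src_unique hdag P h₁.2.2 h₂.2.2 (h₁.2.1.trans h₂.2.1.symm)
  have hiff : (Finset.univ.filter fun e => tgt e = n ∧ e ∈ P.edges).Nonempty ↔
      (Finset.univ.filter fun e => src e = n ∧ e ∈ P.edges).Nonempty := by
    simp only [Finset.filter_nonempty_iff, Finset.mem_univ, true_and]
    constructor
    · rintro ⟨e, he, hn⟩
      obtain ⟨f, hf, hfn⟩ := (in_iff_out hdag P hns hnt).1 ⟨e, hn, he⟩
      exact ⟨f, hfn, hf⟩
    · rintro ⟨e, he, hn⟩
      obtain ⟨f, hf, hfn⟩ := (in_iff_out hdag P hns hnt).2 ⟨e, hn, he⟩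
      exact ⟨f, hfn, hf⟩
  rcases Nat.lt_or_ge (Finset.univ.filter fun e => tgt e = n ∧ e ∈ P.edges).card 1 with h | h
  · have e1 : (Finset.univ.filter fun e => tgt e = n ∧ e ∈ P.edges).card = 0 := by omega
    have e2 : (Finset.univ.filter fun e => src e = n ∧ e ∈ P.edges).card = 0 := by
      rw [Finset.card_eq_zero, ← Finset.not_nonempty_iff_eq_empty]
      rw [Finset.card_eq_zero, ← Finset.not_nonempty_iff_eq_empty] at e1
      exact fun hne => e1 (hiff.2 hne)
    rw [e1, e2]
  · have e1 : (Finset.univ.filter fun e => tgt e = n ∧ e ∈ P.edges).card = 1 := le_antisymm h1 h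
    have e2 : (Finset.univ.filter fun e => src e = n ∧ e ∈ P.edges).card = 1 := by
      refine le_antisymm h2 ?_
      have := hiff.1 (Finset.card_pos.1 (by omega))
      exact Finset.card_pos.2 this
    rw [e1, e2]

/-! The Ryser subspace is contained in the kernel of the edge and mass functionals -/

lemma sum_ite_ind [Fintype (GPath src tgt s t)] (Q : GPath src tgt s t) (e : E) :
    ∑ P : GPath src tgt s t, (if e ∈ P.edges then indP src tgt s t Q P else 0)
      = if e ∈ Q.edges then (1 : ℝ) else 0 := by
  rw [Finset.sum_eq_single Q]
  · simp [indP]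
  · intro P _ hPQ; simp [indP, hPQ]
  · simp

lemma ryser_ker (hdag : IsDAG src tgt s t) {r : GPath src tgt s t → ℝ}
    (hr : r ∈ RyserSub src tgt s t) :
    (∀ e : E, ∑ᶠ P : GPath src tgt s t, (if e ∈ P.edges then r P else 0) = 0) ∧
    (∑ᶠ P : GPath src tgt s t, r P) = 0 := by
  haveI : Fintype (GPath src tgt s t) := pathFintype hdag
  simp only [finsum_eq_sum_of_fintype]
  induction hr using Submodule.span_induction with
  | mem x hx =>
    obtain ⟨n, P₁, P₂, Q₁, Q₂, ⟨a₁, b₁, a₂, b₂, hs₁, hs₂, hq₁, hq₂⟩, rfl⟩ := hx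
    have hd₁ := hs₁.1 ▸ edges_nodup hdag P₁
    have hd₂ := hs₂.1 ▸ edges_nodup hdag P₂
    have hdq₁ := hq₁ ▸ edges_nodup hdag Q₁
    have hdq₂ := hq₂ ▸ edges_nodup hdag Q₂
    constructor
    · intro e
      have expand : ∀ P : GPath src tgt s t,
          (if e ∈ P.edges then (indP src tgt s t Q₁ + indP src tgt s t Q₂
            - indP src tgt s t P₁ - indP src tgt s t P₂) P else 0)
          = (if e ∈ P.edges then indP src tgt s t Q₁ P else 0)
            + (if e ∈ P.edges then indP src tgt s t Q₂ P else 0)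
            - (if e ∈ P.edges then indP src tgt s t P₁ P else 0)
            - (if e ∈ P.edges then indP src tgt s t P₂ P else 0) := by
        intro P; split <;> simp
      rw [Finset.sum_congr rfl fun P _ => expand P]
      simp only [Finset.sum_sub_distrib, Finset.sum_add_distrib,
        sum_ite_ind]
      rw [hq₁, hq₂, hs₁.1, hs₂.1]
      have d1 := List.disjoint_of_nodup_append hd₁
      have d2 := List.disjoint_of_nodup_append hd₂
      have dq1 := List.disjoint_of_nodup_append hdq₁
      have dq2 := List.disjoint_of_nodup_append hdq₂
      simp only [List.mem_append]
      by_cases hA1 : e ∈ a₁ <;> by_cases hA2 : e ∈ a₂ <;>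
        by_cases hB1 : e ∈ b₁ <;> by_cases hB2 : e ∈ b₂ <;>
        first
          | exact (d1 hA1 hB1).elim
          | exact (d2 hA2 hB2).elim
          | exact (dq1 hA1 hB2).elim
          | exact (dq2 hA2 hB1).elim
          | simp [hA1, hA2, hB1, hB2]
    · have : ∀ Q : GPath src tgt s t,
          ∑ P : GPath src tgt s t, indP src tgt s t Q P = 1 := by
        intro Q
        rw [Finset.sum_eq_single Q]
        · simp [indP]
        · intro P _ hPQ; simp [indP, hPQ]
        · simp
      simp only [Pi.sub_apply, Pi.add_apply, Finset.sum_sub_distrib,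
        Finset.sum_add_distrib, this]
      ring
  | zero => simp
  | add x y hx hy ihx ihy =>
    refine ⟨fun e => ?_, ?_⟩
    · calc ∑ P : GPath src tgt s t, (if e ∈ P.edges then (x + y) P else 0)
          = ∑ P : GPath src tgt s t, ((if e ∈ P.edges then x P else 0)
            + (if e ∈ P.edges then y P else 0)) := by
            refine Finset.sum_congr rfl fun P _ => ?_; split <;> simp
        _ = 0 := by rw [Finset.sum_add_distrib, ihx.1 e, ihy.1 e, add_zero]
    · calc ∑ P : GPath src tgt s t, (x + y) P
          = (∑ P : GPath src tgt s t, x P) + ∑ P : GPath src tgt s t, y P :=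
            Finset.sum_add_distrib
        _ = 0 := by rw [ihx.2, ihy.2, add_zero]
  | smul a x hx ihx =>
    refine ⟨fun e => ?_, ?_⟩
    · calc ∑ P : GPath src tgt s t, (if e ∈ P.edges then (a • x) P else 0)
          = ∑ P : GPath src tgt s t, a * (if e ∈ P.edges then x P else 0) := by
            refine Finset.sum_congr rfl fun P _ => ?_; split <;> simp
        _ = 0 := by rw [← Finset.mul_sum, ihx.1 e, mul_zero]
    · calc ∑ P : GPath src tgt s t, (a • x) P
          = a * ∑ P : GPath src tgt s t, x P := by
            rw [Finset.mul_sum]; rfl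
        _ = 0 := by rw [ihx.2, mul_zero]
/-! Flow conservation for the edge weights induced by any path weighting -/

lemma conservation (hdag : IsDAG src tgt s t) (π : GPath src tgt s t → ℝ) {n : N}
    (hns : n ≠ s) (hnt : n ≠ t) :
    (∑ e : E, if tgt e = n then
        (∑ᶠ P : GPath src tgt s t, if e ∈ P.edges then π P else 0) else 0)
      = ∑ e : E, if src e = n then
        (∑ᶠ P : GPath src tgt s t, if e ∈ P.edges then π P else 0) else 0 := by
  haveI : Fintype (GPath src tgt s t) := pathFintype hdag
  simp only [finsum_eq_sum_of_fintype]
  have htrans : ∀ h : E → N,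
      (∑ e : E, if h e = n then (∑ P : GPath src tgt s t,
        if e ∈ P.edges then π P else 0) else 0)
      = ∑ P : GPath src tgt s t, π P *
          ∑ e : E, (if h e = n ∧ e ∈ P.edges then (1 : ℝ) else 0) := by
    intro h
    calc (∑ e : E, if h e = n then (∑ P : GPath src tgt s t,
            if e ∈ P.edges then π P else 0) else 0)
        = ∑ e : E, ∑ P : GPath src tgt s t,
            (if h e = n ∧ e ∈ P.edges then π P else 0) := by
          refine Finset.sum_congr rfl fun e _ => ?_
          by_cases hc : h e = n
          · rw [if_pos hc]
            refine Finset.sum_congr rfl fun P _ => ?_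
            simp [hc]
          · rw [if_neg hc]
            symm
            exact Finset.sum_eq_zero fun P _ => by simp [hc]
      _ = ∑ P : GPath src tgt s t, ∑ e : E,
            (if h e = n ∧ e ∈ P.edges then π P else 0) := Finset.sum_comm
      _ = ∑ P : GPath src tgt s t, π P *
            ∑ e : E, (if h e = n ∧ e ∈ P.edges then (1 : ℝ) else 0) := by
          refine Finset.sum_congr rfl fun P _ => ?_
          rw [Finset.mul_sum]
          refine Finset.sum_congr rfl fun e _ => ?_
          split <;> simp
  rw [htrans tgt, htrans src]
  refine Finset.sum_congr rfl fun P _ => ?_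
  rw [count_in_out hdag P hns hnt]

/-! The main equivalence -/

lemma main_iff (hdag : IsDAG src tgt s t) (π π' : GPath src tgt s t → ℝ)
    (hπ : IsDistP src tgt s t π) (hπ' : IsDistP src tgt s t π') :
    (∃ f : E → ℝ, IsQuasiFlow src tgt s t f ∧
        IsPathDecomp src tgt s t f π ∧ IsPathDecomp src tgt s t f π') ↔
      π - π' ∈ RyserSub src tgt s t := by
  haveI : Fintype (GPath src tgt s t) := pathFintype hdag
  constructor
  · rintro ⟨f, _hf, h1, h2⟩
    apply ker_sub_ryser hdag
    · intro e
      have e1 := h1.2 e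
      have e2 := h2.2 e
      simp only [finsum_eq_sum_of_fintype] at e1 e2 ⊢
      have hsplit : ∀ P ∈ (Finset.univ : Finset (GPath src tgt s t)),
          (if e ∈ P.edges then (π - π') P else 0)
            = (if e ∈ P.edges then π P else 0) - (if e ∈ P.edges then π' P else 0) :=
        fun P _ => by split <;> simp
      rw [Finset.sum_congr rfl hsplit, Finset.sum_sub_distrib, ← e1, ← e2, sub_self]
    · have s1 := hπ.2
      have s2 := hπ'.2
      simp only [finsum_eq_sum_of_fintype] at s1 s2 ⊢
      calc ∑ P : GPath src tgt s t, (π - π') P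
          = ∑ P : GPath src tgt s t, (π P - π' P) :=
            Finset.sum_congr rfl fun P _ => rfl
        _ = 0 := by rw [Finset.sum_sub_distrib, s1, s2, sub_self]
  · intro hR
    refine ⟨fun e => ∑ᶠ P : GPath src tgt s t, if e ∈ P.edges then π P else 0,
      ⟨?_, fun n hns hnt => conservation hdag π hns hnt⟩,
      ⟨hπ.1, fun e => rfl⟩, ⟨hπ'.1, fun e => ?_⟩⟩
    · intro e
      show (0:ℝ) ≤ ∑ᶠ P : GPath src tgt s t, if e ∈ P.edges then π P else 0
      rw [finsum_eq_sum_of_fintype]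
      refine Finset.sum_nonneg fun P _ => ?_
      split
      · exact hπ.1 P
      · exact le_refl 0
    · have hk := (ryser_ker hdag hR).1 e
      show (∑ᶠ P : GPath src tgt s t, if e ∈ P.edges then π P else 0) = _
      simp only [finsum_eq_sum_of_fintype] at hk ⊢
      have hsplit : ∀ P ∈ (Finset.univ : Finset (GPath src tgt s t)),
          (if e ∈ P.edges then (π - π') P else 0)
            = (if e ∈ P.edges then π P else 0) - (if e ∈ P.edges then π' P else 0) :=
        fun P _ => by split <;> simp
      rw [Finset.sum_congr rfl hsplit, Finset.sum_sub_distrib] at hk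
      exact sub_eq_zero.mp hk





theorem statement13 (hdag : IsDAG src tgt s t) :
    (∀ π π' : GPath src tgt s t → ℝ, IsDistP src tgt s t π → IsDistP src tgt s t π' →
      ((∃ f : E → ℝ, IsQuasiFlow src tgt s t f ∧
          IsPathDecomp src tgt s t f π ∧ IsPathDecomp src tgt s t f π') ↔
        π - π' ∈ RyserSub src tgt s t)) ∧
    (∀ M : Set (GPath src tgt s t → ℝ), (∀ ρ ∈ M, IsDistP src tgt s t ρ) →
      ∀ π ∈ M,
        {π' | π' ∈ M ∧ ∃ f : E → ℝ, IsQuasiFlow src tgt s t f ∧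
            IsPathDecomp src tgt s t f π ∧ IsPathDecomp src tgt s t f π'} =
          {π' | (∃ r ∈ RyserSub src tgt s t, π' = π + r) ∧ π' ∈ M}) := by
  constructor
  · exact fun π π' hπ hπ' => main_iff hdag π π' hπ hπ'
  · intro M hM π hπM
    ext π'
    simp only [Set.mem_setOf_eq]
    constructor
    · rintro ⟨hmem, f, hf⟩
      have hpart : π - π' ∈ RyserSub src tgt s t :=
        (main_iff hdag π π' (hM π hπM) (hM π' hmem)).1 ⟨f, hf⟩
      refine ⟨⟨π' - π, ?_, by abel⟩, hmem⟩
      have h : π' - π = -(π - π') := by abel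
      rw [h]
      exact Submodule.neg_mem _ hpart
    · rintro ⟨⟨r, hr, rfl⟩, hmem⟩
      refine ⟨hmem, ?_⟩
      refine (main_iff hdag π (π + r) (hM π hπM) (hM _ hmem)).2 ?_
      have h : π - (π + r) = -r := by abel
      rw [h]
      exact Submodule.neg_mem _ hr

end StmtDAG
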